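/- arXiv:2508.06043 — 2 statements merged into one kernel-verified Lean document; each statement's English description precedes it below -/
import Mathlib

section
/- Let F be a graph with at least one vertex, let t ≥ 1 be an integer, and let H be an F-free graph. Then the join K_t ∨ H is (t+1)F-free. -/
open Finset

/-- `F.ContainsCopy G` means `G` contains a subgraph isomorphic to `F`,
i.e. there is an injective graph homomorphism from `F` to `G`. -/
def SimpleGraph.ContainsCopy {α β : Type*} (F : SimpleGraph α) (G : SimpleGraph β) : Prop :=
  ∃ f : F →g G, Function.Injective f

/-- `F.FreeIn G` means `G` is `F`-free. -/
def SimpleGraph.FreeIn {α β : Type*} (F : SimpleGraph α) (G : SimpleGraph β) : Prop :=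
  ¬ F.ContainsCopy G

/-- `cliqueCount G r` is the number of `r`-cliques of `G` (copies of `K_r`). -/
noncomputable def cliqueCount {β : Type*} (G : SimpleGraph β) (r : ℕ) : ℕ :=
  Nat.card {s : Finset β // G.IsNClique r s}

/-- `cliqueCountOn G r v` is the number of `r`-cliques of `G` containing the vertex `v`. -/
noncomputable def cliqueCountOn {β : Type*} (G : SimpleGraph β) (r : ℕ) (v : β) : ℕ :=
  Nat.card {s : Finset β // G.IsNClique r s ∧ v ∈ s}

/-- The generalized Turán number `ex(n, K_r, F)`: the maximum number of `r`-cliques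
in an `F`-free graph on `n` vertices. -/
noncomputable def exTuran {α : Type*} (n r : ℕ) (F : SimpleGraph α) : ℕ :=
  sSup {m : ℕ | ∃ G : SimpleGraph (Fin n), F.FreeIn G ∧ m = cliqueCount G r}

/-- `multiCopies m F` is the vertex-disjoint union of `m` copies of `F`. -/
def multiCopies {α : Type*} (m : ℕ) (F : SimpleGraph α) : SimpleGraph (Fin m × α) where
  Adj x y := x.1 = y.1 ∧ F.Adj x.2 y.2
  symm := ⟨fun _ _ h => ⟨h.1.symm, h.2.symm⟩⟩
  loopless := ⟨fun x h => F.loopless.irrefl _ h.2⟩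

/-- The join `G ∨ H` of two vertex-disjoint graphs: their disjoint union together with
all edges between them. -/
def joinG {α β : Type*} (G : SimpleGraph α) (H : SimpleGraph β) : SimpleGraph (α ⊕ β) where
  Adj x y := match x, y with
    | Sum.inl u, Sum.inl v => G.Adj u v
    | Sum.inr u, Sum.inr v => H.Adj u v
    | _, _ => True
  symm := by constructor; rintro (u|u) (v|v) h <;> first | exact h.symm | trivial
  loopless := by constructor; rintro (u|u) h <;> exact absurd h (by simp)

/-- if `H` is `F`-free then `K_t ∨ H` is `(t+1)F`-free. -/
theorem stmt7 {α β : Type*} [Nonempty α] (F : SimpleGraph α) (t : ℕ) (ht : 1 ≤ t)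
    (H : SimpleGraph β) (hH : F.FreeIn H) :
    (multiCopies (t + 1) F).FreeIn (joinG (SimpleGraph.completeGraph (Fin t)) H) := by

  rintro ⟨f, hf⟩
  by_cases hall : ∀ i : Fin (t+1), ∃ a : α, ∃ v, f (i, a) = Sum.inl v
  · choose a v hv using hall
    have hinj : Function.Injective v := by
      intro i j hij
      have h2 : f (i, a i) = f (j, a j) := by rw [hv, hv, hij]
      exact congrArg Prod.fst (hf h2)
    have hc := Fintype.card_le_of_injective v hinj
    simp at hc
  · push_neg at hall
    obtain ⟨i, hi⟩ := hall
    have hr : ∀ x : α, ∃ w, f (i, x) = Sum.inr w := by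
      intro x
      cases h : f (i, x) with
      | inl v => exact absurd h (hi x v)
      | inr w => exact ⟨w, rfl⟩
    choose g hg using hr
    apply hH
    refine ⟨⟨g, ?_⟩, ?_⟩
    · intro p q hpq
      have h2 := f.map_adj (show (multiCopies (t+1) F).Adj (i,p) (i,q) from ⟨rfl, hpq⟩)
      rw [hg p, hg q] at h2
      exact h2
    · intro p q hpq
      have h2 : f (i,p) = f (i,q) := by
        rw [hg, hg]; exact congrArg Sum.inr hpq
      exact congrArg Prod.snd (hf h2)
end

section
/- Let t ≥ r ≥ 3 and k ≥ 2 be integers, and let ε be a real number with 0 < ε < 1/(2k-1). Then there exists N such that for all n ≥ N the following holds: if G is a graph on n vertices containing t+1 distinct vertices each of which lies in at least n^{1+ε}/(4kt) copies of K_r, then G contains t+1 pairwise vertex-disjoint copies of C_{2k}. -/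
open Finset

section Aux
set_option linter.unusedSectionVars false

variable {V : Type} [Fintype V] [DecidableEq V]


lemma L1 (G : SimpleGraph V) [DecidableRel G.Adj] (r : ℕ) (v : V) :
    ((univ : Finset (Finset V)).filter (fun s => G.IsNClique r s ∧ v ∈ s)).card ≤
    ((univ : Finset (Finset V)).filter
      (fun s => G.IsNClique (r-1) s ∧ s ⊆ G.neighborFinset v)).card := by
  classical
  apply Finset.card_le_card_of_injOn (fun s => s.erase v)
  · intro s hs
    simp only [mem_coe, mem_filter, mem_univ, true_and] at hs ⊢
    obtain ⟨⟨hcl, hcard⟩, hv⟩ := hs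
    refine ⟨⟨hcl.subset ?_, ?_⟩, ?_⟩
    · exact_mod_cast Finset.coe_subset.mpr (Finset.erase_subset _ _)
    · rw [Finset.card_erase_of_mem hv, hcard]
    · intro u hu
      rw [Finset.mem_erase] at hu
      rw [SimpleGraph.mem_neighborFinset]
      exact hcl (Finset.mem_coe.mpr hv) (Finset.mem_coe.mpr hu.2) (Ne.symm hu.1)
  · intro s hs s' hs' h
    simp only [coe_filter, Set.mem_setOf_eq] at hs hs'
    dsimp only at h
    rw [← Finset.insert_erase hs.2.2, ← Finset.insert_erase hs'.2.2, h]

lemma L2 (G : SimpleGraph V) [DecidableRel G.Adj] (m D : ℕ) (hm : 1 ≤ m) (S : Finset V)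
    (hS : ∀ W ⊆ S, W.Nonempty → ∃ w ∈ W, ((G.neighborFinset w) ∩ W).card < D) :
    ((univ : Finset (Finset V)).filter (fun s => G.IsNClique m s ∧ s ⊆ S)).card
      ≤ S.card * 2 ^ D := by
  classical
  induction S using Finset.strongInduction with
  | _ S ih =>
    rcases S.eq_empty_or_nonempty with rfl | hne
    · have he : ((univ : Finset (Finset V)).filter
          (fun s => G.IsNClique m s ∧ s ⊆ (∅ : Finset V))) = ∅ := by
        rw [Finset.filter_eq_empty_iff]
        rintro s - ⟨hcl, hsub⟩
        have : s = ∅ := Finset.subset_empty.mp hsub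
        subst this
        have := hcl.2
        simp at this
        omega
      rw [he]
      simp
    · obtain ⟨w, hwS, hw⟩ := hS S Subset.rfl hne
      have hrec := ih (S.erase w) (Finset.erase_ssubset hwS)
        (fun W hW hWne => hS W (hW.trans (Finset.erase_subset _ _)) hWne)
      have hsplit : ((univ : Finset (Finset V)).filter (fun s => G.IsNClique m s ∧ s ⊆ S)) ⊆
          ((univ : Finset (Finset V)).filter (fun s => G.IsNClique m s ∧ s ⊆ S.erase w)) ∪
          ((univ : Finset (Finset V)).filter (fun s => (G.IsNClique m s ∧ s ⊆ S) ∧ w ∈ s)) := by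
        intro s hs
        simp only [mem_filter, mem_univ, true_and, mem_union] at hs ⊢
        by_cases hws : w ∈ s
        · exact Or.inr ⟨hs, hws⟩
        · exact Or.inl ⟨hs.1, fun u hu => Finset.mem_erase.mpr
            ⟨fun h => hws (h ▸ hu), hs.2 hu⟩⟩
      have hB : ((univ : Finset (Finset V)).filter
          (fun s => (G.IsNClique m s ∧ s ⊆ S) ∧ w ∈ s)).card ≤ 2 ^ D := by
        have hinj : ((univ : Finset (Finset V)).filter
            (fun s => (G.IsNClique m s ∧ s ⊆ S) ∧ w ∈ s)).card ≤
            ((G.neighborFinset w ∩ S).powerset).card := by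
          apply Finset.card_le_card_of_injOn (fun s => s.erase w)
          · intro s hs
            simp only [mem_coe, mem_filter, mem_univ, true_and] at hs ⊢
            rw [Finset.mem_powerset]
            intro u hu
            rw [Finset.mem_erase] at hu
            rw [Finset.mem_inter, SimpleGraph.mem_neighborFinset]
            exact ⟨hs.1.1.1 (Finset.mem_coe.mpr hs.2) (Finset.mem_coe.mpr hu.2)
              (Ne.symm hu.1), hs.1.2 hu.2⟩
          · intro s hs s' hs' h
            simp only [coe_filter, Set.mem_setOf_eq] at hs hs'
            dsimp only at h
            rw [← Finset.insert_erase hs.2.2, ← Finset.insert_erase hs'.2.2, h]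
        rw [Finset.card_powerset] at hinj
        refine hinj.trans (Nat.pow_le_pow_right (by norm_num) ?_)
        omega
      have hc : S.card - 1 + 1 = S.card := Nat.succ_pred_eq_of_pos (Finset.card_pos.mpr hne)
      calc ((univ : Finset (Finset V)).filter (fun s => G.IsNClique m s ∧ s ⊆ S)).card
          ≤ _ := Finset.card_le_card hsplit
        _ ≤ _ + _ := Finset.card_union_le _ _
        _ ≤ (S.card - 1) * 2 ^ D + 2 ^ D := by
            rw [Finset.card_erase_of_mem hwS] at hrec; exact Nat.add_le_add hrec hB
        _ = (S.card - 1 + 1) * 2 ^ D := by rw [Nat.succ_mul]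
        _ = S.card * 2 ^ D := by rw [hc]

lemma L3 (G : SimpleGraph V) [DecidableRel G.Adj] (d : ℕ) (W : Finset V)
    (hW : ∀ w ∈ W, d ≤ ((G.neighborFinset w) ∩ W).card) :
    ∀ m : ℕ, m ≤ d + 1 → W.Nonempty →
    ∃ l : List V, l.length = m ∧ l.Nodup ∧ l.Chain' G.Adj ∧ ∀ u ∈ l, u ∈ W := by
  intro m
  induction m with
  | zero => exact fun _ _ => ⟨[], rfl, by simp, List.isChain_nil, by simp⟩
  | succ m ih =>
    intro hm hne
    obtain ⟨l, hlen, hnd, hch, hmem⟩ := ih (by omega) hne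
    match l, hlen with
    | [], hlen =>
      obtain ⟨w, hw⟩ := hne
      refine ⟨[w], by simp [← hlen], by simp, List.isChain_singleton _, by simpa using hw⟩
    | h :: tl, hlen =>
      have hhW : h ∈ W := hmem _ (by simp)
      have hlen' : tl.length + 1 = m := by simpa using hlen
      have hd := hW h hhW
      have hnonempty : (((G.neighborFinset h) ∩ W) \ (h :: tl).toFinset).Nonempty := by
        rw [← Finset.card_pos]
        have h1 := Finset.card_sdiff_add_card_inter ((G.neighborFinset h) ∩ W) (h :: tl).toFinset
        have h2 : ((G.neighborFinset h) ∩ W) ∩ (h :: tl).toFinset ⊆ tl.toFinset := by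
          intro u hu
          rw [Finset.mem_inter, Finset.mem_inter, SimpleGraph.mem_neighborFinset] at hu
          rcases List.mem_cons.mp (List.mem_toFinset.mp hu.2) with rfl | hc
          · exact absurd hu.1.1 (G.irrefl)
          · exact List.mem_toFinset.mpr hc
        have h3 : tl.toFinset.card ≤ m - 1 := by
          have h4 := tl.toFinset_card_le
          omega
        have h5 := Finset.card_le_card h2
        omega
      obtain ⟨u, hu⟩ := hnonempty
      rw [Finset.mem_sdiff, Finset.mem_inter, SimpleGraph.mem_neighborFinset] at hu
      refine ⟨u :: h :: tl, by simp [hlen], ?_, ?_, ?_⟩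
      · rw [List.nodup_cons]
        refine ⟨fun hc => hu.2 (List.mem_toFinset.mpr hc), hnd⟩
      · rw [List.Chain', List.isChain_cons_cons]
        exact ⟨hu.1.1.symm, hch⟩
      · intro v hv
        rcases List.mem_cons.mp hv with rfl | hv
        · exact hu.1.2
        · exact hmem _ hv

lemma L4 (G : SimpleGraph V) [DecidableRel G.Adj] (v : V) (F : Finset V) (k r : ℕ)
    (hk : 2 ≤ k) (hr : 3 ≤ r)
    (hbig : Fintype.card V * 2 ^ (2*k + F.card) <
        ((univ : Finset (Finset V)).filter (fun s => G.IsNClique r s ∧ v ∈ s)).card) :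
    ∃ l : List V, l.length = 2*k - 1 ∧ l.Nodup ∧ l.Chain' G.Adj ∧
      (∀ u ∈ l, G.Adj v u) ∧ (∀ u ∈ l, u ∉ F) := by
  classical
  set D := 2*k + F.card with hD
  set S := G.neighborFinset v with hSdef
  have h1 := L1 G r v
  have hnot : ¬ (∀ W ⊆ S, W.Nonempty → ∃ w ∈ W, ((G.neighborFinset w) ∩ W).card < D) := by
    intro h
    have h2 := L2 G (r-1) D (by omega) S h
    have h3 : S.card ≤ Fintype.card V := by
      simpa using Finset.card_le_univ S
    have := h1.trans h2
    have := this.trans (Nat.mul_le_mul_right _ h3)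
    omega
  push_neg at hnot
  obtain ⟨W, hWS, hWne, hWdeg⟩ := hnot
  set W' := W \ F with hW'
  have hdeg' : ∀ w ∈ W', 2*k ≤ ((G.neighborFinset w) ∩ W').card := by
    intro w hw
    have hd := hWdeg w (Finset.mem_sdiff.mp hw).1
    have hsub : ((G.neighborFinset w) ∩ W) \ F ⊆ (G.neighborFinset w) ∩ W' := by
      intro u hu
      rw [Finset.mem_sdiff, Finset.mem_inter] at hu
      exact Finset.mem_inter.mpr ⟨hu.1.1, Finset.mem_sdiff.mpr ⟨hu.1.2, hu.2⟩⟩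
    have h6 := Finset.le_card_sdiff F ((G.neighborFinset w) ∩ W)
    have h7 := Finset.card_le_card hsub
    omega
  have hne' : W'.Nonempty := by
    obtain ⟨w, hw⟩ := hWne
    have hd := hWdeg w hw
    have h8 : ((G.neighborFinset w) ∩ W).card ≤ W.card :=
      Finset.card_le_card (Finset.inter_subset_right)
    have h9 := Finset.le_card_sdiff F W
    rw [hW', ← Finset.card_pos]
    omega
  obtain ⟨l, hlen, hnd, hch, hmem⟩ := L3 G (2*k) W' hdeg' (2*k-1) (by omega) hne'
  refine ⟨l, hlen, hnd, hch, ?_, ?_⟩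
  · intro u hu
    have := hmem u hu
    rw [hW', Finset.mem_sdiff] at this
    have := hWS this.1
    rw [hSdef, SimpleGraph.mem_neighborFinset] at this
    exact this
  · intro u hu
    have := hmem u hu
    rw [hW', Finset.mem_sdiff] at this
    exact this.2


lemma L5 (G : SimpleGraph V) (v : V) (k : ℕ) (hk : 2 ≤ k) [NeZero (2*k)] (l : List V)
    (hlen : l.length = 2*k - 1) (hnd : l.Nodup) (hch : l.Chain' G.Adj)
    (hadj : ∀ u ∈ l, G.Adj v u) :
    ∃ c : Fin (2*k) → V, (∀ j, G.Adj (c j) (c (j+1))) ∧ Function.Injective c ∧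
      c 0 = v ∧ (∀ j : Fin (2*k), j ≠ 0 → c j ∈ l) := by
  set L := v :: l with hLdef
  have hL : L.length = 2*k := by simp [hLdef, hlen]; omega
  have hchL : L.Chain' G.Adj := by
    rw [hLdef, List.Chain', List.isChain_cons]
    exact ⟨fun y hy => hadj y (List.mem_of_mem_head? hy), hch⟩
  have hndL : L.Nodup := by
    rw [hLdef, List.nodup_cons]
    exact ⟨fun hc => G.irrefl (hadj v hc), hnd⟩
  set e : Fin (2*k) → Fin L.length := Fin.cast hL.symm with he
  refine ⟨fun j => L.get (e j), ?_, ?_, ?_, ?_⟩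
  · intro j
    dsimp only
    have hone : ((1 : Fin (2*k))).val = 1 := by
      rw [Fin.val_one']
      exact Nat.mod_eq_of_lt (by omega)
    have hj1 : ((j + 1 : Fin (2*k))).val = (j.val + 1) % (2*k) := by
      rw [Fin.val_add, hone]
    by_cases hlt : j.val + 1 < 2*k
    · have key := List.isChain_iff_getElem.mp hchL j.val (by omega)
      have e1 : e j = ⟨j.val, by omega⟩ := rfl
      have e2 : e (j + 1) = ⟨j.val + 1, by omega⟩ := by
        apply Fin.ext
        simp only [he, Fin.coe_cast, hj1]
        exact Nat.mod_eq_of_lt hlt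
      rw [e1, e2]
      exact key
    · have hjv : j.val = 2*k - 1 := by have := j.2; omega
      have e2 : e (j + 1) = ⟨0, by omega⟩ := by
        apply Fin.ext
        simp only [he, Fin.coe_cast, hj1, hjv]
        have h2 : 2*k - 1 + 1 = 2*k := by omega
        rw [h2, Nat.mod_self]
      have e1 : e j = ⟨(2*k - 2) + 1, by omega⟩ := by
        apply Fin.ext
        simp only [he, Fin.coe_cast, hjv]
        omega
      rw [e1, e2]
      have hmem : L.get ⟨(2*k-2)+1, by omega⟩ ∈ l := by
        show l.get ⟨2*k-2, by omega⟩ ∈ l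
        exact List.get_mem _ _
      have h0 : L.get ⟨0, by omega⟩ = v := rfl
      rw [h0]
      exact (hadj _ hmem).symm
  · intro a b hab
    have h1 : L.get (e a) = L.get (e b) := hab
    have h2 : e a = e b := (List.nodup_iff_injective_get.mp hndL) h1
    apply Fin.ext
    simpa [he, Fin.ext_iff] using h2
  · dsimp only
    have e0 : e 0 = ⟨0, by omega⟩ := by
      apply Fin.ext
      simp [he]
    rw [e0]
    rfl
  · intro j hj
    dsimp only
    have hjv : j.val ≠ 0 := by
      intro hc
      exact hj (Fin.ext (by simp [hc]))
    have e1 : e j = ⟨(j.val - 1) + 1, by have := j.2; omega⟩ := by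
      apply Fin.ext
      simp only [he, Fin.coe_cast]
      omega
    rw [e1]
    show l.get ⟨j.val - 1, by have := j.2; omega⟩ ∈ l
    exact List.get_mem _ _

lemma L6 (G : SimpleGraph V) [DecidableRel G.Adj] (v : V) (F : Finset V) (k r : ℕ)
    (hk : 2 ≤ k) (hr : 3 ≤ r) [NeZero (2*k)]
    (hbig : Fintype.card V * 2 ^ (2*k + F.card) <
        ((univ : Finset (Finset V)).filter (fun s => G.IsNClique r s ∧ v ∈ s)).card) :
    ∃ c : Fin (2*k) → V, (∀ j, G.Adj (c j) (c (j+1))) ∧ Function.Injective c ∧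
      c 0 = v ∧ (∀ j : Fin (2*k), j ≠ 0 → c j ∉ F) := by
  obtain ⟨l, hlen, hnd, hch, hadj, hF⟩ := L4 G v F k r hk hr hbig
  obtain ⟨c, hc1, hc2, hc3, hc4⟩ := L5 G v k hk l hlen hnd hch hadj
  exact ⟨c, hc1, hc2, hc3, fun j hj => hF _ (hc4 j hj)⟩

lemma L7 (G : SimpleGraph V) [DecidableRel G.Adj] (k r t : ℕ) (hk : 2 ≤ k) (hr : 3 ≤ r)
    [NeZero (2*k)] (x : Fin (t+1) → V) (hinj : Function.Injective x)
    (hbig : ∀ i, Fintype.card V * 2 ^ (2*k + ((t+1) + (t+1)*(2*k))) <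
        ((univ : Finset (Finset V)).filter (fun s => G.IsNClique r s ∧ (x i) ∈ s)).card) :
    ∃ c : Fin (t+1) → Fin (2*k) → V,
      (∀ a j, G.Adj (c a j) (c a (j+1))) ∧ (∀ a, Function.Injective (c a)) ∧
      (∀ a, c a 0 = x a) ∧ (∀ a b, a ≠ b → ∀ j j', c a j ≠ c b j') := by
  suffices h : ∀ i : ℕ, ∀ hi : i ≤ t+1, ∃ c : Fin i → Fin (2*k) → V,
      (∀ a j, G.Adj (c a j) (c a (j+1))) ∧ (∀ a, Function.Injective (c a)) ∧
      (∀ a, c a 0 = x (Fin.castLE hi a)) ∧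
      (∀ a j, j ≠ 0 → ∀ b, c a j ≠ x b) ∧
      (∀ a b, a ≠ b → ∀ j j', c a j ≠ c b j') by
    obtain ⟨c, h1, h2, h3, h4, h5⟩ := h (t+1) le_rfl
    refine ⟨c, h1, h2, fun a => ?_, h5⟩
    rw [h3 a]
    congr 1
  intro i
  induction i with
  | zero =>
    intro hi
    exact ⟨Fin.elim0, fun a => a.elim0, fun a => a.elim0, fun a => a.elim0,
      fun a => a.elim0, fun a => a.elim0⟩
  | succ i ih =>
    intro hi
    obtain ⟨c, h1, h2, h3, h4, h5⟩ := ih (by omega)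
    set F : Finset V := (univ.image x) ∪
      (univ.image (fun p : Fin i × Fin (2*k) => c p.1 p.2)) with hF
    have hFcard : F.card ≤ (t+1) + (t+1)*(2*k) := by
      refine (Finset.card_union_le _ _).trans (Nat.add_le_add ?_ ?_)
      · exact (Finset.card_image_le).trans (by simp)
      · refine (Finset.card_image_le).trans ?_
        simp only [Finset.card_univ, Fintype.card_prod, Fintype.card_fin]
        exact Nat.mul_le_mul_right _ (by omega)
    have hbig' : Fintype.card V * 2 ^ (2*k + F.card) <
        ((univ : Finset (Finset V)).filter
          (fun s => G.IsNClique r s ∧ (x ⟨i, by omega⟩) ∈ s)).card := by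
      refine lt_of_le_of_lt ?_ (hbig ⟨i, by omega⟩)
      exact Nat.mul_le_mul_left _ (Nat.pow_le_pow_right (by norm_num) (by omega))
    obtain ⟨cn, hcn1, hcn2, hcn3, hcn4⟩ := L6 G (x ⟨i, by omega⟩) F k r hk hr hbig'
    have hcnF : ∀ j, (j : Fin (2*k)) ≠ 0 → ∀ u, cn j = u →
        (∀ b, u ≠ x b) ∧ (∀ a j', u ≠ c a j') := by
      intro j hj u hu
      have := hcn4 j hj
      rw [hu] at this
      constructor
      · intro b hb
        exact this (Finset.mem_union_left _ (Finset.mem_image.mpr ⟨b, Finset.mem_univ _, hb.symm⟩))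
      · intro a j' hb
        exact this (Finset.mem_union_right _
          (Finset.mem_image.mpr ⟨(a, j'), Finset.mem_univ _, hb.symm⟩))
    -- key disjointness of new cycle from old ones
    have hmain : ∀ b0 : Fin i, ∀ j j' : Fin (2*k), cn j ≠ c b0 j' := by
      intro b0 j j' heq
      by_cases hj : j = 0
      · subst hj
        rw [hcn3] at heq
        by_cases hj' : j' = 0
        · subst hj'
          rw [h3 b0] at heq
          have := hinj heq
          have hlt := b0.2
          rw [Fin.ext_iff] at this
          simp at this
          omega
        · exact h4 b0 j' hj' _ heq.symm
      · exact (hcnF j hj _ rfl).2 b0 j' heq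
    refine ⟨Fin.snoc c cn, ?_, ?_, ?_, ?_, ?_⟩
    · intro a j
      refine Fin.lastCases ?_ ?_ a
      · simpa only [Fin.snoc_last] using hcn1 j
      · intro a0
        simpa only [Fin.snoc_castSucc] using h1 a0 j
    · intro a
      refine Fin.lastCases ?_ ?_ a
      · simpa only [Fin.snoc_last] using hcn2
      · intro a0
        simpa only [Fin.snoc_castSucc] using h2 a0
    · intro a
      refine Fin.lastCases ?_ ?_ a
      · rw [Fin.snoc_last, hcn3]
        congr 1
      · intro a0
        rw [Fin.snoc_castSucc, h3 a0]
        congr 1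
    · intro a j hj b
      refine Fin.lastCases ?_ ?_ a
      · rw [Fin.snoc_last]
        exact (hcnF j hj _ rfl).1 b
      · intro a0
        rw [Fin.snoc_castSucc]
        exact h4 a0 j hj b
    · intro a b
      refine Fin.lastCases ?_ ?_ a
      · refine Fin.lastCases ?_ ?_ b
        · intro hab
          exact absurd rfl hab
        · intro b0 _ j j'
          rw [Fin.snoc_last, Fin.snoc_castSucc]
          exact hmain b0 j j'
      · intro a0
        refine Fin.lastCases ?_ ?_ b
        · intro _ j j'
          rw [Fin.snoc_castSucc, Fin.snoc_last]
          exact fun h => hmain a0 j' j h.symm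
        · intro b0 hab j j'
          rw [Fin.snoc_castSucc, Fin.snoc_castSucc]
          exact h5 a0 b0 (fun h => hab (by rw [h])) j j'

lemma cliqueCountOn_eq {V : Type} [Fintype V] (G : SimpleGraph V) (r : ℕ) (v : V)
    [DecidablePred (fun s : Finset V => G.IsNClique r s ∧ v ∈ s)] :
    cliqueCountOn G r v =
      ((univ : Finset (Finset V)).filter (fun s => G.IsNClique r s ∧ v ∈ s)).card := by
  classical
  rw [cliqueCountOn, Nat.card_eq_fintype_card, Fintype.card_subtype]

end Aux

/-- `t+1` vertices in many `K_r`'s give `t+1` disjoint copies of `C_{2k}`. -/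
theorem stmt14 (t r k : ℕ) (htr : r ≤ t) (hr : 3 ≤ r) (hk : 2 ≤ k) (ε : ℝ)
    (hε1 : 0 < ε) (hε2 : ε < 1 / (2 * (k : ℝ) - 1)) :
    ∃ N : ℕ, ∀ n : ℕ, N ≤ n → ∀ (V : Type) (_ : Fintype V), ∀ G : SimpleGraph V,
      Fintype.card V = n →
      ∀ x : Fin (t + 1) → V, Function.Injective x →
      (∀ i, (n : ℝ) ^ ((1 : ℝ) + ε) / (4 * (k : ℝ) * (t : ℝ)) ≤ (cliqueCountOn G r (x i) : ℝ)) →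
      (multiCopies (t + 1) (SimpleGraph.cycleGraph (2 * k))).ContainsCopy G := by
  have ht3 : 3 ≤ t := hr.trans htr
  set Dm : ℕ := 2*k + ((t+1) + (t+1)*(2*k)) with hDm
  set C : ℝ := 4*(k:ℝ)*(t:ℝ)*(2^Dm + 1) with hCdef
  have hktpos : (0:ℝ) < 4*(k:ℝ)*(t:ℝ) := by
    have h1 : (2:ℝ) ≤ (k:ℝ) := by exact_mod_cast hk
    have h2 : (3:ℝ) ≤ (t:ℝ) := by exact_mod_cast ht3
    nlinarith
  have hC0 : (0:ℝ) ≤ C := by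
    rw [hCdef]
    positivity
  refine ⟨⌈C ^ ((1:ℝ)/ε)⌉₊ + 1, ?_⟩
  intro n hn V _ G hcard x hxinj hcount
  classical
  haveI : NeZero (2*k) := ⟨by omega⟩
  have hn1 : 1 ≤ n := by omega
  have hnpos : (0:ℝ) < (n:ℝ) := by exact_mod_cast hn1
  -- (n:ℝ)^ε ≥ C
  have hnC : C ≤ (n:ℝ) ^ ε := by
    have h1 : (C ^ ((1:ℝ)/ε) : ℝ) ≤ (n:ℝ) := by
      have := Nat.le_ceil (C ^ ((1:ℝ)/ε))
      have h2 : ((⌈C ^ ((1:ℝ)/ε)⌉₊ : ℕ) : ℝ) ≤ (n:ℝ) := by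
        exact_mod_cast Nat.le_of_succ_le hn
      linarith
    calc C = C ^ (((1:ℝ)/ε) * ε) := by
            rw [one_div_mul_cancel hε1.ne', Real.rpow_one]
      _ = (C ^ ((1:ℝ)/ε)) ^ ε := Real.rpow_mul hC0 _ _
      _ ≤ (n:ℝ) ^ ε := Real.rpow_le_rpow (Real.rpow_nonneg hC0 _) h1 hε1.le
  have hbig : ∀ i, Fintype.card V * 2 ^ Dm <
      ((univ : Finset (Finset V)).filter (fun s => G.IsNClique r s ∧ (x i) ∈ s)).card := by
    intro i
    have hc := hcount i
    rw [cliqueCountOn_eq] at hc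
    set Ni : ℕ := ((univ : Finset (Finset V)).filter
      (fun s => G.IsNClique r s ∧ (x i) ∈ s)).card with hNi
    have key : (n:ℝ) * (2^Dm + 1) ≤ (Ni : ℝ) := by
      refine le_trans ?_ hc
      rw [le_div_iff₀ hktpos]
      have expand : (n:ℝ) ^ ((1:ℝ) + ε) = (n:ℝ) * (n:ℝ) ^ ε := by
        rw [Real.rpow_add hnpos, Real.rpow_one]
      rw [expand]
      calc (n:ℝ) * (2^Dm + 1) * (4*(k:ℝ)*(t:ℝ)) = (n:ℝ) * C := by rw [hCdef]; ring
        _ ≤ (n:ℝ) * (n:ℝ) ^ ε := by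
            exact mul_le_mul_of_nonneg_left hnC hnpos.le
    have key2 : n * (2^Dm + 1) ≤ Ni := by
      have : ((n * (2^Dm + 1) : ℕ) : ℝ) ≤ (Ni : ℝ) := by push_cast; linarith
      exact_mod_cast this
    rw [hcard]
    calc n * 2 ^ Dm < n * (2^Dm + 1) := by
          rw [Nat.mul_add, Nat.mul_one]
          omega
      _ ≤ Ni := key2
  obtain ⟨c, h1, h2, h3, h5⟩ := L7 G k r t hk hr x hxinj hbig
  have hone : ((1 : Fin (2*k))).val = 1 := by
    rw [Fin.val_one']
    exact Nat.mod_eq_of_lt (by omega)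
  have hadj : ∀ (i : Fin (t+1)) (u w : Fin (2*k)),
      (SimpleGraph.cycleGraph (2*k)).Adj u w → G.Adj (c i u) (c i w) := by
    intro i u w huw
    rw [SimpleGraph.cycleGraph_adj'] at huw
    rcases huw with h | h
    · have hsub : u - w = 1 := Fin.ext (by rw [hone]; exact h)
      have : u = w + 1 := by
        rw [sub_eq_iff_eq_add] at hsub
        rw [hsub, add_comm]
      rw [this]
      exact (h1 i w).symm
    · have hsub : w - u = 1 := Fin.ext (by rw [hone]; exact h)
      have : w = u + 1 := by
        rw [sub_eq_iff_eq_add] at hsub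
        rw [hsub, add_comm]
      rw [this]
      exact h1 i u
  refine ⟨⟨fun p => c p.1 p.2, ?_⟩, ?_⟩
  · intro p q hpq
    obtain ⟨hp1, hp2⟩ := (hpq : p.1 = q.1 ∧ _)
    show G.Adj (c p.1 p.2) (c q.1 q.2)
    rw [hp1]
    exact hadj q.1 p.2 q.2 hp2
  · intro p q h
    have h' : c p.1 p.2 = c q.1 q.2 := h
    by_cases hpq : p.1 = q.1
    · have h'' : c p.1 p.2 = c p.1 q.2 := by rw [h', hpq]
      exact Prod.ext hpq (h2 p.1 h'')
    · exact absurd h' (h5 p.1 q.1 hpq p.2 q.2)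
end
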